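/- For the two-peakon ODE system p₁' = ½p₁(p₁r₂ - p₂r₁) sgn(q₁-q₂) e^{-|q₁-q₂|}, p₂' = ½p₂(p₂r₁ - p₁r₂) sgn(q₂-q₁) e^{-|q₂-q₁|}, r₁' = -½r₁(p₁r₂ - p₂r₁) sgn(q₁-q₂) e^{-|q₁-q₂|}, r₂' = -½r₂(p₂r₁ - p₁r₂) sgn(q₂-q₁) e^{-|q₂-q₁|}, the quantities p₁r₁, p₂r₂, and p₁/p₂ are first integrals: they are constant along any solution on an interval where q₁(t) ≠ q₂(t) and p₂ ≠ 0. -/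

import Mathlib

lemma const_of_hasDerivAt_zero (f : ℝ → ℝ) (a b : ℝ)
    (h : ∀ t ∈ Set.Ioo a b, HasDerivAt f 0 t) :
    ∀ s ∈ Set.Ioo a b, ∀ t ∈ Set.Ioo a b, f s = f t := by
  have key : ∀ s t, s ∈ Set.Ioo a b → t ∈ Set.Ioo a b → s ≤ t → f t = f s := by
    intro s t hs ht hst
    have hsub : Set.Icc s t ⊆ Set.Ioo a b := fun x hx =>
      ⟨lt_of_lt_of_le hs.1 hx.1, lt_of_le_of_lt hx.2 ht.2⟩
    have := constant_of_has_deriv_right_zero (f := f) (a := s) (b := t)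
      (fun x hx => (h x (hsub hx)).continuousAt.continuousWithinAt)
      (fun x hx => (h x (hsub ⟨hx.1, hx.2.le⟩)).hasDerivWithinAt)
    exact this t (Set.right_mem_Icc.2 hst)
  intro s hs t ht
  rcases le_total s t with h' | h'
  · exact (key s t hs ht h').symm
  · exact key t s ht hs h'

/-- For the two-peakon dynamical system of the two-component cubic Camassa–Holm equation
(`b = 0`), the quantities `p₁ r₁`, `p₂ r₂` and `p₁ / p₂` are first integrals: they are
constant along any solution on an open interval where `q₁ ≠ q₂` and `p₂ ≠ 0`. -/
theorem two_peakon_first_integrals (p₁ p₂ r₁ r₂ q₁ q₂ : ℝ → ℝ) (a b : ℝ)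
    (hp₁ : ∀ t ∈ Set.Ioo a b, HasDerivAt p₁
      ((1 / 2) * p₁ t * (p₁ t * r₂ t - p₂ t * r₁ t) * Real.sign (q₁ t - q₂ t) *
        Real.exp (-|q₁ t - q₂ t|)) t)
    (hp₂ : ∀ t ∈ Set.Ioo a b, HasDerivAt p₂
      ((1 / 2) * p₂ t * (p₂ t * r₁ t - p₁ t * r₂ t) * Real.sign (q₂ t - q₁ t) *
        Real.exp (-|q₂ t - q₁ t|)) t)
    (hr₁ : ∀ t ∈ Set.Ioo a b, HasDerivAt r₁
      (-(1 / 2) * r₁ t * (p₁ t * r₂ t - p₂ t * r₁ t) * Real.sign (q₁ t - q₂ t) *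
        Real.exp (-|q₁ t - q₂ t|)) t)
    (hr₂ : ∀ t ∈ Set.Ioo a b, HasDerivAt r₂
      (-(1 / 2) * r₂ t * (p₂ t * r₁ t - p₁ t * r₂ t) * Real.sign (q₂ t - q₁ t) *
        Real.exp (-|q₂ t - q₁ t|)) t)
    (hq : ∀ t ∈ Set.Ioo a b, q₁ t ≠ q₂ t)
    (hp2ne : ∀ t ∈ Set.Ioo a b, p₂ t ≠ 0) :
    ∀ s ∈ Set.Ioo a b, ∀ t ∈ Set.Ioo a b,
      p₁ s * r₁ s = p₁ t * r₁ t ∧ p₂ s * r₂ s = p₂ t * r₂ t ∧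
        p₁ s / p₂ s = p₁ t / p₂ t := by
  have h1 : ∀ t ∈ Set.Ioo a b, HasDerivAt (fun t => p₁ t * r₁ t) 0 t := by
    intro t ht
    have := (hp₁ t ht).mul (hr₁ t ht)
    refine this.congr_deriv ?_
    ring
  have h2 : ∀ t ∈ Set.Ioo a b, HasDerivAt (fun t => p₂ t * r₂ t) 0 t := by
    intro t ht
    have := (hp₂ t ht).mul (hr₂ t ht)
    refine this.congr_deriv ?_
    ring
  have h3 : ∀ t ∈ Set.Ioo a b, HasDerivAt (fun t => p₁ t / p₂ t) 0 t := by
    intro t ht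
    have := (hp₁ t ht).div (hp₂ t ht) (hp2ne t ht)
    refine this.congr_deriv ?_
    rw [show q₂ t - q₁ t = -(q₁ t - q₂ t) by ring, Real.sign_neg, abs_neg]
    field_simp
    ring
  intro s hs t ht
  exact ⟨const_of_hasDerivAt_zero _ a b h1 s hs t ht,
    const_of_hasDerivAt_zero _ a b h2 s hs t ht,
    const_of_hasDerivAt_zero _ a b h3 s hs t ht⟩
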